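/- The Gaussian width of C₂(x*,v*) ∩ S^{n+m-1} is at most √(η²(λ₁·∂f(x*)) + η²(λ₂·∂g(v*))), where η²(S) = E inf_{u∈S} ‖g − u‖₂² is the Gaussian squared distance. -/

import Mathlib

open MeasureTheory
open scoped RealInnerProductSpace Pointwise
open Metric Real ProbabilityTheory

/-- The standard Gaussian measure on `ℝ^k` (Euclidean space). -/
noncomputable def stdGaussian (k : ℕ) : Measure (EuclideanSpace ℝ (Fin k)) :=
  (Measure.pi fun _ : Fin k => ProbabilityTheory.gaussianReal 0 1).map
    (⇑(EuclideanSpace.equiv (Fin k) ℝ).symm)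

/-- Gaussian width of a subset of `ℝ^n × ℝ^m`. -/
noncomputable def gaussianWidth₂ {n m : ℕ}
    (C : Set (EuclideanSpace ℝ (Fin n) × EuclideanSpace ℝ (Fin m))) : ℝ :=
  ∫ p, (⨆ q : C,
      (⟪p.1, (q : EuclideanSpace ℝ (Fin n) × EuclideanSpace ℝ (Fin m)).1⟫ +
        ⟪p.2, (q : EuclideanSpace ℝ (Fin n) × EuclideanSpace ℝ (Fin m)).2⟫))
    ∂((stdGaussian n).prod (stdGaussian m))

/-- Gaussian squared distance `η²(S) = E inf_{u∈S} ‖g − u‖₂²`. -/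
noncomputable def gaussianSqDist {k : ℕ} (S : Set (EuclideanSpace ℝ (Fin k))) : ℝ :=
  ∫ x, (Metric.infDist x S) ^ 2 ∂(stdGaussian k)

/-- Subdifferential of `f` at `x`. -/
def subdiffE {k : ℕ} (f : EuclideanSpace ℝ (Fin k) → ℝ) (x : EuclideanSpace ℝ (Fin k)) :
    Set (EuclideanSpace ℝ (Fin k)) :=
  {u | ∀ d : EuclideanSpace ℝ (Fin k), f (x + d) ≥ f x + ⟪u, d⟫}


section Aux
set_option linter.unusedSectionVars false

lemma pi_map_eval (k : ℕ) (i : Fin k) :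
    (Measure.pi fun _ : Fin k => gaussianReal 0 1).map (Function.eval i) = gaussianReal 0 1 := by
  ext s hs
  rw [Measure.map_apply (measurable_pi_apply i) hs, Set.eval_preimage, Measure.pi_pi]
  rw [Fintype.prod_eq_single i (fun j hj => by simp [Function.update_of_ne hj])]
  simp

lemma integrable_sq_gaussian : Integrable (fun x : ℝ => x ^ 2) (gaussianReal 0 1) := by
  rw [gaussianReal_of_var_ne_zero 0 one_ne_zero]
  rw [integrable_withDensity_iff (measurable_gaussianPDF 0 1)
    (Filter.Eventually.of_forall fun x => ENNReal.ofReal_lt_top)]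
  have hI : Integrable (fun x : ℝ => x ^ (2:ℝ) * Real.exp (-(1/2) * x ^ 2)) :=
    integrable_rpow_mul_exp_neg_mul_sq (by norm_num) (by norm_num)
  simp_rw [show (2:ℝ) = ((2:ℕ):ℝ) by norm_num, Real.rpow_natCast] at hI
  apply Integrable.congr ((hI.const_mul ((Real.sqrt (2*π))⁻¹)))
  refine Filter.Eventually.of_forall fun x => ?_
  simp only [gaussianPDF_def, gaussianPDFReal, NNReal.coe_one, mul_one, sub_zero, one_div]
  rw [ENNReal.toReal_ofReal (by positivity)]
  norm_num
  rw [show -x^2/2 = -(1/(2:ℝ))*x^2 by ring]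
  ring

instance stdGaussian_isProbability (k : ℕ) : IsProbabilityMeasure (stdGaussian k) :=
  Measure.isProbabilityMeasure_map (Continuous.aemeasurable (by
    exact (EuclideanSpace.equiv (Fin k) ℝ).symm.continuous))

lemma integrable_normSq_stdGaussian (k : ℕ) :
    Integrable (fun x : EuclideanSpace ℝ (Fin k) => ‖x‖ ^ 2) (stdGaussian k) := by
  rw [_root_.stdGaussian]
  rw [integrable_map_measure
    (by exact (continuous_norm.pow 2).aestronglyMeasurable)
    (by exact (EuclideanSpace.equiv (Fin k) ℝ).symm.continuous.aemeasurable)]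
  have : ((fun x : EuclideanSpace ℝ (Fin k) => ‖x‖ ^ 2) ∘
      ⇑(EuclideanSpace.equiv (Fin k) ℝ).symm) = fun y : Fin k → ℝ => ∑ i, (y i) ^ 2 := by
    funext y
    simp only [Function.comp_apply]
    rw [EuclideanSpace.norm_eq, Real.sq_sqrt (by positivity)]
    simp [Real.norm_eq_abs, sq_abs]
  rw [this]
  apply integrable_finset_sum
  intro i _
  have h := integrable_sq_gaussian
  rw [← pi_map_eval k i] at h
  have hsm : AEStronglyMeasurable (fun x : ℝ => x ^ 2)
      ((Measure.pi fun _ : Fin k => gaussianReal 0 1).map (Function.eval i)) :=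
    (continuous_pow 2).aestronglyMeasurable
  exact (integrable_map_measure hsm (measurable_pi_apply i).aemeasurable).mp h

lemma integrable_infDistSq {k : ℕ} (S : Set (EuclideanSpace ℝ (Fin k))) (hS : S.Nonempty) :
    Integrable (fun x => (Metric.infDist x S) ^ 2) (stdGaussian k) := by
  obtain ⟨u, hu⟩ := hS
  have hcont : Continuous fun x : EuclideanSpace ℝ (Fin k) => (Metric.infDist x S) ^ 2 :=
    (continuous_infDist_pt S).pow 2
  refine Integrable.mono' (((integrable_normSq_stdGaussian k).const_mul 2).add
    (integrable_const (2 * ‖u‖ ^ 2 + 2 * (1 + 2 * ‖u‖)))) hcont.aestronglyMeasurable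
    (Filter.Eventually.of_forall fun x => ?_)
  have h1 : Metric.infDist x S ≤ ‖x‖ + ‖u‖ := by
    calc Metric.infDist x S ≤ dist x u := Metric.infDist_le_dist_of_mem hu
    _ ≤ ‖x‖ + ‖u‖ := by rw [dist_eq_norm]; exact (norm_sub_le _ _)
  have h0 : 0 ≤ Metric.infDist x S := Metric.infDist_nonneg
  rw [Real.norm_eq_abs, abs_of_nonneg (by positivity)]
  simp only [Pi.add_apply]
  nlinarith [norm_nonneg x, norm_nonneg u, sq_nonneg (‖x‖ - ‖u‖)]

section prodTransfer
variable {α β : Type*} [MeasurableSpace α] [MeasurableSpace β]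
  {μ : Measure α} {ν : Measure β} [IsProbabilityMeasure μ] [IsProbabilityMeasure ν]

lemma map_fst_prod_prob : (μ.prod ν).map Prod.fst = μ := by
  rw [Measure.map_fst_prod]; simp

lemma map_snd_prod_prob : (μ.prod ν).map Prod.snd = ν := by
  rw [Measure.map_snd_prod]; simp

lemma integrable_comp_fst {h : α → ℝ} (hm : AEStronglyMeasurable h μ)
    (hi : Integrable h μ) : Integrable (fun p : α × β => h p.1) (μ.prod ν) := by
  have hmap : (μ.prod ν).map Prod.fst = μ := map_fst_prod_prob
  have hm' : AEStronglyMeasurable h ((μ.prod ν).map Prod.fst) := hmap.symm ▸ hm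
  exact (integrable_map_measure hm' measurable_fst.aemeasurable).mp (by rwa [hmap])

lemma integrable_comp_snd {h : β → ℝ} (hm : AEStronglyMeasurable h ν)
    (hi : Integrable h ν) : Integrable (fun p : α × β => h p.2) (μ.prod ν) := by
  have hmap : (μ.prod ν).map Prod.snd = ν := map_snd_prod_prob
  have hm' : AEStronglyMeasurable h ((μ.prod ν).map Prod.snd) := hmap.symm ▸ hm
  exact (integrable_map_measure hm' measurable_snd.aemeasurable).mp (by rwa [hmap])

lemma integral_comp_fst {h : α → ℝ} (hm : AEStronglyMeasurable h μ) :
    ∫ p, h p.1 ∂(μ.prod ν) = ∫ x, h x ∂μ := by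
  have hmap : (μ.prod ν).map Prod.fst = μ := map_fst_prod_prob
  have hm' : AEStronglyMeasurable h ((μ.prod ν).map Prod.fst) := hmap.symm ▸ hm
  rw [← integral_map measurable_fst.aemeasurable hm', hmap]

lemma integral_comp_snd {h : β → ℝ} (hm : AEStronglyMeasurable h ν) :
    ∫ p, h p.2 ∂(μ.prod ν) = ∫ x, h x ∂ν := by
  have hmap : (μ.prod ν).map Prod.snd = ν := map_snd_prod_prob
  have hm' : AEStronglyMeasurable h ((μ.prod ν).map Prod.snd) := hmap.symm ▸ hm
  rw [← integral_map measurable_snd.aemeasurable hm', hmap]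

end prodTransfer


end Aux

/-- the Gaussian width of `C₂(x*,v*) ∩ S^{n+m-1}` is at most
`√(η²(λ₁·∂f(x*)) + η²(λ₂·∂g(v*)))`. -/
theorem gaussianWidth_cone_two_bound {n m : ℕ}
    (f : EuclideanSpace ℝ (Fin n) → ℝ) (g : EuclideanSpace ℝ (Fin m) → ℝ)
    (hf : ConvexOn ℝ Set.univ f) (hg : ConvexOn ℝ Set.univ g)
    (xs : EuclideanSpace ℝ (Fin n)) (vs : EuclideanSpace ℝ (Fin m))
    (hfne : (subdiffE f xs).Nonempty) (hfc : IsCompact (subdiffE f xs))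
    (hgne : (subdiffE g vs).Nonempty) (hgc : IsCompact (subdiffE g vs))
    (l₁ l₂ : ℝ) (hl₁ : 0 < l₁) (hl₂ : 0 < l₂) :
    gaussianWidth₂
        ({p : EuclideanSpace ℝ (Fin n) × EuclideanSpace ℝ (Fin m) |
            ∀ u ∈ subdiffE f xs, ∀ s ∈ subdiffE g vs,
              ⟪p.1, u⟫ + (l₂ / l₁) * ⟪p.2, s⟫ ≤ 0} ∩
          {p | ‖p.1‖ ^ 2 + ‖p.2‖ ^ 2 = 1}) ≤
      Real.sqrt (gaussianSqDist (l₁ • subdiffE f xs) + gaussianSqDist (l₂ • subdiffE g vs)) := by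
  classical
  set A : Set (EuclideanSpace ℝ (Fin n)) := l₁ • subdiffE f xs with hA
  set B : Set (EuclideanSpace ℝ (Fin m)) := l₂ • subdiffE g vs with hB
  have hAne : A.Nonempty := hfne.smul_set
  have hBne : B.Nonempty := hgne.smul_set
  have hAc : IsCompact A := hfc.image (continuous_const_smul l₁)
  have hBc : IsCompact B := hgc.image (continuous_const_smul l₂)
  set μ := (stdGaussian n).prod (stdGaussian m) with hμ
  set C : Set (EuclideanSpace ℝ (Fin n) × EuclideanSpace ℝ (Fin m)) :=
    ({p : EuclideanSpace ℝ (Fin n) × EuclideanSpace ℝ (Fin m) |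
        ∀ u ∈ subdiffE f xs, ∀ s ∈ subdiffE g vs,
          ⟪p.1, u⟫ + (l₂ / l₁) * ⟪p.2, s⟫ ≤ 0} ∩
      {p | ‖p.1‖ ^ 2 + ‖p.2‖ ^ 2 = 1}) with hC
  set D : EuclideanSpace ℝ (Fin n) × EuclideanSpace ℝ (Fin m) → ℝ :=
    fun p => (Metric.infDist p.1 A) ^ 2 + (Metric.infDist p.2 B) ^ 2 with hD
  set F : EuclideanSpace ℝ (Fin n) × EuclideanSpace ℝ (Fin m) → ℝ :=
    fun p => ⨆ q : C,
      (⟪p.1, (q : EuclideanSpace ℝ (Fin n) × EuclideanSpace ℝ (Fin m)).1⟫ +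
        ⟪p.2, (q : EuclideanSpace ℝ (Fin n) × EuclideanSpace ℝ (Fin m)).2⟫) with hF
  -- integrability of D
  have hD1int : Integrable (fun p : EuclideanSpace ℝ (Fin n) × EuclideanSpace ℝ (Fin m) =>
      (Metric.infDist p.1 A) ^ 2) μ :=
    integrable_comp_fst ((continuous_infDist_pt A).pow 2).aestronglyMeasurable
      (integrable_infDistSq A hAne)
  have hD2int : Integrable (fun p : EuclideanSpace ℝ (Fin n) × EuclideanSpace ℝ (Fin m) =>
      (Metric.infDist p.2 B) ^ 2) μ :=
    integrable_comp_snd ((continuous_infDist_pt B).pow 2).aestronglyMeasurable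
      (integrable_infDistSq B hBne)
  have hDint : Integrable D μ := hD1int.add hD2int
  have hDcont : Continuous D :=
    (((continuous_infDist_pt A).comp continuous_fst).pow 2).add
      (((continuous_infDist_pt B).comp continuous_snd).pow 2)
  -- integrability of sqrt ∘ D
  have hGint : Integrable (fun p => Real.sqrt (D p)) μ := by
    refine Integrable.mono' ((integrable_const (1:ℝ)).add hDint)
      (Real.continuous_sqrt.comp hDcont).aestronglyMeasurable
      (Filter.Eventually.of_forall fun p => ?_)
    have hD0 : 0 ≤ D p := by positivity
    rw [Real.norm_eq_abs, abs_of_nonneg (Real.sqrt_nonneg _), Pi.add_apply]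
    calc Real.sqrt (D p) ≤ Real.sqrt ((1 + D p) ^ 2) := by
          apply Real.sqrt_le_sqrt; nlinarith
    _ = 1 + D p := Real.sqrt_sq (by linarith)
    _ = (fun _ => (1:ℝ)) p + D p := rfl
  -- pointwise bound
  have key : ∀ p : EuclideanSpace ℝ (Fin n) × EuclideanSpace ℝ (Fin m),
      F p ≤ Real.sqrt (D p) := by
    intro p
    obtain ⟨a, haA, hda⟩ := hAc.exists_infDist_eq_dist hAne p.1
    obtain ⟨b, hbB, hdb⟩ := hBc.exists_infDist_eq_dist hBne p.2
    rcases isEmpty_or_nonempty C with hE | hNE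
    · rw [hF]
      simp only [Real.iSup_of_isEmpty]
      positivity
    · refine ciSup_le ?_
      rintro ⟨⟨q1, q2⟩, hq1, hq2⟩
      simp only [Set.mem_setOf_eq] at hq1 hq2
      obtain ⟨u, hu, hau⟩ := Set.mem_smul_set.mp haA
      obtain ⟨s, hs, hbs⟩ := Set.mem_smul_set.mp hbB
      have hcone := hq1 u hu s hs
      have h2 : l₁ * ⟪q1, u⟫ + l₂ * ⟪q2, s⟫ ≤ 0 := by
        have h3 : l₁ * (⟪q1, u⟫ + (l₂ / l₁) * ⟪q2, s⟫) ≤ 0 :=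
          mul_nonpos_of_nonneg_of_nonpos hl₁.le hcone
        have h4 : l₁ * (l₂ / l₁) = l₂ := by field_simp
        rw [mul_add, ← mul_assoc, h4] at h3
        linarith
      have step1 : ⟪p.1, q1⟫ + ⟪p.2, q2⟫ ≤ ⟪p.1 - a, q1⟫ + ⟪p.2 - b, q2⟫ := by
        rw [inner_sub_left, inner_sub_left, ← hau, ← hbs,
          real_inner_smul_left, real_inner_smul_left]
        rw [real_inner_comm q1 u, real_inner_comm q2 s]
        linarith
      have step2 : ⟪p.1 - a, q1⟫ + ⟪p.2 - b, q2⟫ ≤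
          ‖p.1 - a‖ * ‖q1‖ + ‖p.2 - b‖ * ‖q2‖ :=
        add_le_add (real_inner_le_norm _ _) (real_inner_le_norm _ _)
      have step3 : ‖p.1 - a‖ * ‖q1‖ + ‖p.2 - b‖ * ‖q2‖ ≤
          Real.sqrt (‖p.1 - a‖ ^ 2 + ‖p.2 - b‖ ^ 2) := by
        apply Real.le_sqrt_of_sq_le
        nlinarith [sq_nonneg (‖p.1 - a‖ * ‖q2‖ - ‖p.2 - b‖ * ‖q1‖),
          norm_nonneg (p.1 - a), norm_nonneg (p.2 - b), norm_nonneg q1, norm_nonneg q2]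
      have hDp : D p = ‖p.1 - a‖ ^ 2 + ‖p.2 - b‖ ^ 2 := by
        rw [hD]
        simp only [hda, hdb, dist_eq_norm]
      calc ⟪p.1, q1⟫ + ⟪p.2, q2⟫ ≤ _ := step1
      _ ≤ _ := step2
      _ ≤ _ := step3
      _ = Real.sqrt (D p) := by rw [hDp]
  -- main chain
  have hwidth : gaussianWidth₂ C = ∫ p, F p ∂μ := rfl
  rw [hwidth]
  have hRHS : gaussianSqDist A + gaussianSqDist B = ∫ p, D p ∂μ := by
    rw [hD]
    rw [integral_add hD1int hD2int]
    rw [integral_comp_fst (h := fun x => Metric.infDist x A ^ 2) ((continuous_infDist_pt A).pow 2).aestronglyMeasurable,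
      integral_comp_snd (h := fun x => Metric.infDist x B ^ 2) ((continuous_infDist_pt B).pow 2).aestronglyMeasurable]
    rfl
  rw [hRHS]
  by_cases hFi : Integrable F μ
  · calc ∫ p, F p ∂μ ≤ ∫ p, Real.sqrt (D p) ∂μ :=
        integral_mono hFi hGint key
    _ ≤ Real.sqrt (∫ p, D p ∂μ) := by
        refine (Real.strictConcaveOn_sqrt.concaveOn).le_map_integral
          (Real.continuous_sqrt.continuousOn) isClosed_Ici
          (Filter.Eventually.of_forall fun p => ?_) hDint hGint
        simp only [Set.mem_Ici]
        positivity
  · rw [integral_undef hFi]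
    positivity
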